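/- Consider two INGARCH(1,1)-type recursions λ_{1t} = μ₁(t/T) + a₁₁(t/T)X_{t−1} + b₁₁(t/T)λ_{1,t−1} and λ_{0t} = μ₀(t/T) + a₀₁(t/T)X_{t−1} + b₀₁(t/T)λ_{0,t−1} with sup_t b₁₁(t/T) ≤ 1 − M_μ/M_X for 0 < M_μ < M_X. Then Σ_{t=1}^T |λ_{1t} − λ_{0t}| ≤ (M_X/M_μ)[T‖μ₁−μ₀‖_∞ + (Σ_t X_{t−1})‖a₁₁−a₀₁‖_∞ + (1 − M_μ/M_X)|λ_{10} − λ_{00}| + (Σ_t λ_{0,t−1})‖b₁₁−b₀₁‖_∞]. -/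

import Mathlib

open scoped BigOperators

private lemma sum_shift_aux (f : ℕ → ℝ) (n : ℕ) :
    ∑ t ∈ Finset.Icc 1 n, f t = ∑ i ∈ Finset.range n, f (i+1) := by
  induction n with
  | zero => simp
  | succ n ih => rw [Finset.sum_Icc_succ_top (Nat.one_le_iff_ne_zero.2 (Nat.succ_ne_zero n)),
      Finset.sum_range_succ, ih]

/-- Comparison of two INGARCH(1,1)-type recursions: the summed absolute difference
of the intensities is controlled by the sup-norm distances of the coefficient
functions and the initial difference. -/
theorem stmt_16 (T : ℕ) (X lam1 lam0 : ℕ → ℝ)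
    (μ1 μ0 a11 a01 b11 b01 : ℝ → ℝ) (Mμ MX : ℝ)
    (hMμ : 0 < Mμ) (hMX : Mμ < MX)
    (hX : ∀ t, 0 ≤ X t) (hl1 : ∀ t, 0 ≤ lam1 t) (hl0 : ∀ t, 0 ≤ lam0 t)
    (hrec1 : ∀ t, 1 ≤ t → t ≤ T →
      lam1 t = μ1 ((t : ℝ) / T) + a11 ((t : ℝ) / T) * X (t - 1)
        + b11 ((t : ℝ) / T) * lam1 (t - 1))
    (hrec0 : ∀ t, 1 ≤ t → t ≤ T →
      lam0 t = μ0 ((t : ℝ) / T) + a01 ((t : ℝ) / T) * X (t - 1)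
        + b01 ((t : ℝ) / T) * lam0 (t - 1))
    (hbnn : ∀ t, 1 ≤ t → t ≤ T → 0 ≤ b11 ((t : ℝ) / T))
    (hb : ∀ t, 1 ≤ t → t ≤ T → b11 ((t : ℝ) / T) ≤ 1 - Mμ / MX)
    (dμ da db : ℝ)
    (hdμ : ∀ t, 1 ≤ t → t ≤ T → |μ1 ((t : ℝ) / T) - μ0 ((t : ℝ) / T)| ≤ dμ)
    (hda : ∀ t, 1 ≤ t → t ≤ T → |a11 ((t : ℝ) / T) - a01 ((t : ℝ) / T)| ≤ da)
    (hdb : ∀ t, 1 ≤ t → t ≤ T → |b11 ((t : ℝ) / T) - b01 ((t : ℝ) / T)| ≤ db) :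
    ∑ t ∈ Finset.Icc 1 T, |lam1 t - lam0 t|
      ≤ (MX / Mμ) * ((T : ℝ) * dμ
          + (∑ t ∈ Finset.Icc 1 T, X (t - 1)) * da
          + (1 - Mμ / MX) * |lam1 0 - lam0 0|
          + (∑ t ∈ Finset.Icc 1 T, lam0 (t - 1)) * db) := by
  have hMX0 : (0:ℝ) < MX := hMμ.trans hMX
  set r : ℝ := 1 - Mμ / MX with hrdef
  have hq : 0 < Mμ / MX := div_pos hMμ hMX0
  have hq1 : Mμ / MX < 1 := (div_lt_one hMX0).2 hMX
  have hr0 : 0 ≤ r := by simp [hrdef]; linarith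
  set D : ℕ → ℝ := fun t => |lam1 t - lam0 t| with hDdef
  have hDnn : ∀ t, 0 ≤ D t := fun t => abs_nonneg _
  rcases Nat.eq_zero_or_pos T with hT | hT
  · subst hT
    simp only [Finset.Icc_self, Nat.cast_zero]
    norm_num
    positivity
  -- one-step bound
  have key : ∀ t ∈ Finset.Icc 1 T,
      D t ≤ (dμ + X (t-1) * da + lam0 (t-1) * db) + r * D (t-1) := by
    intro t ht
    rw [Finset.mem_Icc] at ht
    obtain ⟨h1, h2⟩ := ht
    have e1 := hrec1 t h1 h2
    have e0 := hrec0 t h1 h2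
    have : lam1 t - lam0 t =
        (μ1 ((t:ℝ)/T) - μ0 ((t:ℝ)/T))
        + (a11 ((t:ℝ)/T) - a01 ((t:ℝ)/T)) * X (t-1)
        + b11 ((t:ℝ)/T) * (lam1 (t-1) - lam0 (t-1))
        + (b11 ((t:ℝ)/T) - b01 ((t:ℝ)/T)) * lam0 (t-1) := by
      rw [e1, e0]; ring
    calc D t ≤ |μ1 ((t:ℝ)/T) - μ0 ((t:ℝ)/T)|
        + |(a11 ((t:ℝ)/T) - a01 ((t:ℝ)/T)) * X (t-1)|
        + |b11 ((t:ℝ)/T) * (lam1 (t-1) - lam0 (t-1))|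
        + |(b11 ((t:ℝ)/T) - b01 ((t:ℝ)/T)) * lam0 (t-1)| := by
          rw [hDdef]; simp only [this]
          exact (abs_add_le _ _).trans (by
            gcongr <;> exact (abs_add_le _ _).trans (by gcongr; exact abs_add_le _ _))
      _ ≤ (dμ + X (t-1) * da + lam0 (t-1) * db) + r * D (t-1) := by
          rw [abs_mul, abs_mul, abs_mul, abs_of_nonneg (hX (t-1)),
            abs_of_nonneg (hl0 (t-1)), abs_of_nonneg (hbnn t h1 h2)]
          have h3 := hdμ t h1 h2
          have h4 := hda t h1 h2
          have h5 := hdb t h1 h2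
          have h6 := hb t h1 h2
          have h7 : b11 ((t:ℝ)/T) * |lam1 (t-1) - lam0 (t-1)| ≤ r * D (t-1) := by
            apply mul_le_mul h6 le_rfl (abs_nonneg _) hr0
          nlinarith [hX (t-1), hl0 (t-1), abs_nonneg (lam1 (t-1) - lam0 (t-1))]
  -- sum the bound
  set S : ℝ := ∑ t ∈ Finset.Icc 1 T, D t with hSdef
  have hsum : S ≤ ∑ t ∈ Finset.Icc 1 T, ((dμ + X (t-1) * da + lam0 (t-1) * db) + r * D (t-1)) :=
    Finset.sum_le_sum key
  have hshift : ∑ t ∈ Finset.Icc 1 T, D (t-1) ≤ D 0 + S := by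
    have h1 : ∑ t ∈ Finset.Icc 1 T, D (t-1) = ∑ i ∈ Finset.range T, D i := by
      rw [sum_shift_aux (fun t => D (t-1)) T]
      simp
    have h2 : ∑ i ∈ Finset.range T, D i ≤ ∑ i ∈ Finset.range (T+1), D i :=
      Finset.sum_le_sum_of_subset_of_nonneg (Finset.range_subset_range.2 (Nat.le_succ T))
        (fun i _ _ => hDnn i)
    have h3 : ∑ i ∈ Finset.range (T+1), D i = D 0 + ∑ t ∈ Finset.Icc 1 T, D t := by
      rw [Finset.sum_range_succ', ← sum_shift_aux D T, add_comm]
    rw [h1]; rw [h3] at h2; exact h2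
  have hC : ∑ t ∈ Finset.Icc 1 T, ((dμ + X (t-1) * da + lam0 (t-1) * db) + r * D (t-1))
      = ((T:ℝ) * dμ + (∑ t ∈ Finset.Icc 1 T, X (t-1)) * da
        + (∑ t ∈ Finset.Icc 1 T, lam0 (t-1)) * db)
        + r * ∑ t ∈ Finset.Icc 1 T, D (t-1) := by
    rw [Finset.sum_add_distrib, ← Finset.mul_sum]
    congr 1
    rw [Finset.sum_add_distrib, Finset.sum_add_distrib, Finset.sum_const,
      Nat.card_Icc, ← Finset.sum_mul, ← Finset.sum_mul]
    simp [mul_comm]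
  have hmain : S ≤ ((T:ℝ) * dμ + (∑ t ∈ Finset.Icc 1 T, X (t-1)) * da
      + (∑ t ∈ Finset.Icc 1 T, lam0 (t-1)) * db) + r * (D 0 + S) := by
    refine hsum.trans ?_
    rw [hC]
    gcongr
  have hfin : (Mμ / MX) * S ≤ (T:ℝ) * dμ + (∑ t ∈ Finset.Icc 1 T, X (t-1)) * da
      + r * D 0 + (∑ t ∈ Finset.Icc 1 T, lam0 (t-1)) * db := by
    have : (1 - r) * S ≤ ((T:ℝ) * dμ + (∑ t ∈ Finset.Icc 1 T, X (t-1)) * da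
      + (∑ t ∈ Finset.Icc 1 T, lam0 (t-1)) * db) + r * D 0 := by nlinarith [hmain]
    have hr1 : 1 - r = Mμ / MX := by simp [hrdef]
    linarith [hr1 ▸ this]
  have hS : S ≤ (MX / Mμ) * ((T:ℝ) * dμ + (∑ t ∈ Finset.Icc 1 T, X (t-1)) * da
      + r * D 0 + (∑ t ∈ Finset.Icc 1 T, lam0 (t-1)) * db) := by
    have hMXne : MX ≠ 0 := ne_of_gt hMX0
    have hMμne : Mμ ≠ 0 := ne_of_gt hMμ
    have := mul_le_mul_of_nonneg_left hfin (le_of_lt (div_pos hMX0 hMμ))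
    calc S = (MX / Mμ) * ((Mμ / MX) * S) := by field_simp
      _ ≤ _ := this
  exact hS
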